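/- Let k ≥ 1. Then ∑_{i=1}^{k} x_1^{2^{i−1}}·G_{2^k−2^{i−1}} = x_1^{2^k} in F₂[x_1,…,x_k]. -/

import Mathlib

open MvPolynomial

/-- `Vdm k t` is the determinant of the `k × k` matrix whose `(i, j)` entry is `xᵢ ^ t j`,
in `F₂[x₁, …, x_k]`. -/
noncomputable def Vdm (k : ℕ) (t : Fin k → ℕ) : MvPolynomial (Fin k) (ZMod 2) :=
  Matrix.det (Matrix.of fun i j : Fin k => (X i : MvPolynomial (Fin k) (ZMod 2)) ^ t j)

/-- `D k = V(2^0, 2^1, …, 2^(k-1))`. -/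
noncomputable def D (k : ℕ) : MvPolynomial (Fin k) (ZMod 2) :=
  Vdm k fun j => 2 ^ (j : ℕ)

/-- `N k ℓ j` is the Vandermonde determinant whose exponent tuple lists the 2-powers
`2^0, …, 2^(k-1)` with `2^j` omitted, followed by `2^ℓ`. -/
noncomputable def N (k ℓ j : ℕ) : MvPolynomial (Fin k) (ZMod 2) :=
  Vdm k fun i =>
    if (i : ℕ) + 1 < k then (if (i : ℕ) < j then 2 ^ (i : ℕ) else 2 ^ ((i : ℕ) + 1))
    else 2 ^ ℓ

/- `G k m` is the sum of all monomials of total degree `m` in `x₁, …, x_k` in which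
every nonzero exponent is a power of 2. -/
open Classical in
noncomputable def G (k m : ℕ) : MvPolynomial (Fin k) (ZMod 2) :=
  ∑ d : Fin k → Fin (m + 1),
    if (∑ i, (d i : ℕ)) = m ∧ ∀ i, (d i : ℕ) ≠ 0 → ∃ e, (d i : ℕ) = 2 ^ e then
      ∏ i, (X i : MvPolynomial (Fin k) (ZMod 2)) ^ (d i : ℕ)
    else 0


open Finset in

lemma two_pow_geom (n : ℕ) : ∑ x ∈ Finset.range n, 2 ^ x = 2 ^ n - 1 := by
  induction n with
  | zero => simp
  | succ n ih =>
      rw [Finset.sum_range_succ, ih]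
      have h : (2:ℕ) ^ (n+1) = 2 * 2 ^ n := by ring
      omega

lemma card_ge_of_sum_pow {ι : Type*} [DecidableEq ι] (n : ℕ) :
    ∀ (c : ℕ) (s : Finset ι) (d : ι → ℕ), s.card = c →
      (∀ j ∈ s, ∃ e, d j = 2 ^ e) → (∑ j ∈ s, d j) = 2 ^ n - 1 → n ≤ c := by
  intro c
  induction c with
  | zero =>
      intro s d hc hpow hsum
      rw [Finset.card_eq_zero] at hc
      subst hc
      simp only [Finset.sum_empty] at hsum
      have h1 : (2:ℕ) ^ n ≤ 1 := by omega
      by_contra hn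
      have : 1 < (2:ℕ) ^ n := Nat.one_lt_two_pow_iff.mpr (by omega)
      omega
  | succ c ih =>
      intro s d hc hpow hsum
      by_cases hrep : ∃ j₁ ∈ s, ∃ j₂ ∈ s, j₁ ≠ j₂ ∧ d j₁ = d j₂
      · obtain ⟨j₁, h₁, j₂, h₂, hne, heq⟩ := hrep
        have h₂' : j₂ ∈ s.erase j₁ := Finset.mem_erase.mpr ⟨hne.symm, h₂⟩
        set d' := Function.update d j₂ (2 * d j₂) with hd'
        have hsum' : ∑ j ∈ s.erase j₁, d' j = 2 ^ n - 1 := by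
          have e1 : ∑ j ∈ s, d j = d j₁ + ∑ j ∈ s.erase j₁, d j :=
            (Finset.add_sum_erase _ _ h₁).symm
          have e2 : ∑ j ∈ s.erase j₁, d j = d j₂ + ∑ j ∈ (s.erase j₁).erase j₂, d j :=
            (Finset.add_sum_erase _ _ h₂').symm
          have e3 : ∑ j ∈ s.erase j₁, d' j = d' j₂ + ∑ j ∈ (s.erase j₁).erase j₂, d' j :=
            (Finset.add_sum_erase _ _ h₂').symm
          have e4 : ∑ j ∈ (s.erase j₁).erase j₂, d' j = ∑ j ∈ (s.erase j₁).erase j₂, d j := by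
            refine Finset.sum_congr rfl fun j hj => ?_
            exact Function.update_of_ne (Finset.mem_erase.mp hj).1 _ _
          have e5 : d' j₂ = 2 * d j₂ := Function.update_self _ _ _
          omega
        have hpow' : ∀ j ∈ s.erase j₁, ∃ e, d' j = 2 ^ e := by
          intro j hj
          by_cases hjj : j = j₂
          · subst hjj
            obtain ⟨e, he⟩ := hpow j (Finset.mem_of_mem_erase hj)
            refine ⟨e + 1, ?_⟩
            simp only [hd', Function.update_self, he]
            ring
          · simp only [hd', Function.update_of_ne hjj]
            exact hpow j (Finset.mem_of_mem_erase hj)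
        have hcard : (s.erase j₁).card = c := by
          rw [Finset.card_erase_of_mem h₁, hc]
          omega
        exact le_trans (ih _ _ hcard hpow' hsum') (Nat.le_succ c)
      · push_neg at hrep
        have hinj : Set.InjOn d ↑s := by
          intro a ha b hb hab
          by_contra hne
          exact hrep a ha b hb hne hab
        have himg : ∑ v ∈ s.image d, v = 2 ^ n - 1 := by
          rw [Finset.sum_image (fun a ha b hb => hinj ha hb)]
          exact hsum
        have hlog : ∀ v ∈ s.image d, 2 ^ Nat.log 2 v = v := by
          intro v hv
          obtain ⟨j, hj, rfl⟩ := Finset.mem_image.mp hv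
          obtain ⟨e, he⟩ := hpow j hj
          rw [he, Nat.log_pow one_lt_two]
        set E := (s.image d).image (Nat.log 2) with hE
        have hEsum : ∑ e ∈ E, (2:ℕ) ^ e = 2 ^ n - 1 := by
          rw [hE, Finset.sum_image ?_]
          · rw [← himg]
            exact Finset.sum_congr rfl fun v hv => hlog v hv
          · intro a ha b hb hab
            rw [← hlog a ha, ← hlog b hb, hab]
        have hEsub : E ⊆ Finset.range n := by
          intro e he
          obtain ⟨v, hv, rfl⟩ := Finset.mem_image.mp he
          have h1 : v ≤ ∑ j ∈ s, d j := by
            obtain ⟨j, hj, rfl⟩ := Finset.mem_image.mp hv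
            exact Finset.single_le_sum (fun j _ => Nat.zero_le _) hj
          have h2 : (2:ℕ) ^ Nat.log 2 v < 2 ^ n := by
            rw [hlog v hv]
            have : 1 ≤ (2:ℕ)^n := Nat.one_le_two_pow
            omega
          rw [Finset.mem_range]
          exact (Nat.pow_lt_pow_iff_right one_lt_two).mp h2
        have hEeq : E = Finset.range n := by
          by_contra hne
          have hss : E ⊂ Finset.range n := lt_of_le_of_ne hEsub hne
          obtain ⟨x, hx, hxE⟩ := Finset.exists_of_ssubset hss
          have := Finset.sum_lt_sum_of_subset hEsub hx hxE (Nat.pow_pos (n := x) two_pos)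
            (fun j _ _ => Nat.zero_le _)
          rw [hEsum, two_pow_geom] at this
          omega
        have : n = E.card := by rw [hEeq, Finset.card_range]
        have hcle : E.card ≤ s.card :=
          le_trans (Finset.card_image_le) (Finset.card_image_le)
        omega

def Cd (k : ℕ) (p : ℕ × (Fin k → ℕ)) : Prop :=
  (∑ j, p.2 j) = 2 ^ k - 2 ^ p.1 ∧ ∀ j, p.2 j ≠ 0 → ∃ e, p.2 j = 2 ^ e

def sp (k : ℕ) (z : Fin k) : ℕ × (Fin k → ℕ) :=
  (k - 1, fun j => if j = z then 2 ^ (k - 1) else 0)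

open Classical in
noncomputable def ptn (k : ℕ) (z : Fin k) (p : ℕ × (Fin k → ℕ)) : ℕ × (Fin k → ℕ) :=
  if Cd k p then
    if p.2 z = 0 then (p.1 - 1, Function.update p.2 z (2 ^ (p.1 - 1)))
    else if Nat.log 2 (p.2 z) = p.1 then (p.1 + 1, Function.update p.2 z 0)
    else (Nat.log 2 (p.2 z), Function.update p.2 z (2 ^ p.1))
  else p

section
variable (k : ℕ) (z : Fin k)

lemma sum_split (f : Fin k → ℕ) :
    ∑ j, f j = f z + ∑ j ∈ Finset.univ.erase z, f j :=
  (Finset.add_sum_erase _ f (Finset.mem_univ _)).symm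

lemma sum_update (f : Fin k → ℕ) (v : ℕ) :
    ∑ j, Function.update f z v j = v + ∑ j ∈ Finset.univ.erase z, f j := by
  rw [sum_split k z, Function.update_self]
  congr 1
  exact Finset.sum_congr rfl fun j hj =>
    Function.update_of_ne (Finset.mem_erase.mp hj).1 _ _

lemma ptn_spec (hk : 1 ≤ k) (p : ℕ × (Fin k → ℕ))
    (hik : p.1 < k) (hPb : ∀ j, p.2 j < 2 ^ k) (hC : Cd k p) (hnsp : p ≠ sp k z) :
    Cd k (ptn k z p) ∧ (ptn k z p).1 < k ∧ (∀ j, (ptn k z p).2 j < 2 ^ k) ∧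
      ptn k z p ≠ sp k z ∧ ptn k z p ≠ p ∧ ptn k z (ptn k z p) = p ∧
      2 ^ (ptn k z p).1 + (ptn k z p).2 z = 2 ^ p.1 + p.2 z ∧
      ∀ j, j ≠ z → (ptn k z p).2 j = p.2 j := by
  classical
  obtain ⟨hsum, hpow⟩ := hC
  have hik2 : 2 ^ p.1 < 2 ^ k := (Nat.pow_lt_pow_iff_right one_lt_two).mpr hik
  have h1p : 1 ≤ 2 ^ p.1 := Nat.one_le_two_pow
  have hser : ∑ j ∈ Finset.univ.erase z, p.2 j = 2 ^ k - 2 ^ p.1 - p.2 z := by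
    have := sum_split k z p.2
    omega
  by_cases hz : p.2 z = 0
  · -- Case A : first coordinate exponent is 0
    have hi1 : 1 ≤ p.1 := by
      by_contra hi0'
      have hi0 : p.1 = 0 := by omega
      have hsub : Finset.univ.filter (fun j => p.2 j ≠ 0) ⊆ Finset.univ.erase z := by
        intro j hj
        rw [Finset.mem_filter] at hj
        refine Finset.mem_erase.mpr ⟨?_, Finset.mem_univ _⟩
        intro hjz; rw [hjz] at hj; exact hj.2 hz
      have hcard : (Finset.univ.filter (fun j => p.2 j ≠ 0)).card ≤ k - 1 := by
        have := Finset.card_le_card hsub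
        rwa [Finset.card_erase_of_mem (Finset.mem_univ _), Finset.card_univ,
          Fintype.card_fin] at this
      have hssum : ∑ j ∈ Finset.univ.filter (fun j => p.2 j ≠ 0), p.2 j = 2 ^ k - 1 := by
        rw [Finset.sum_filter_ne_zero, hsum, hi0, pow_zero]
      have := card_ge_of_sum_pow k _ _ p.2 rfl
        (fun j hj => hpow j (Finset.mem_filter.mp hj).2) hssum
      omega
    have hps : 2 ^ p.1 = 2 * 2 ^ (p.1 - 1) := by
      have h : p.1 - 1 + 1 = p.1 := by omega
      calc 2 ^ p.1 = 2 ^ (p.1 - 1 + 1) := by rw [h]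
        _ = 2 * 2 ^ (p.1 - 1) := by ring
    have h1q : (1:ℕ) ≤ 2 ^ (p.1 - 1) := Nat.one_le_two_pow
    have hCq : Cd k (p.1 - 1, Function.update p.2 z (2 ^ (p.1 - 1))) := by
      constructor
      · show ∑ j, Function.update p.2 z (2 ^ (p.1 - 1)) j = 2 ^ k - 2 ^ (p.1 - 1)
        rw [sum_update k z]
        omega
      · intro j hj
        have hj' : Function.update p.2 z (2 ^ (p.1 - 1)) j ≠ 0 := hj
        show ∃ e, Function.update p.2 z (2 ^ (p.1 - 1)) j = 2 ^ e
        by_cases hjz : j = z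
        · exact ⟨p.1 - 1, by rw [hjz, Function.update_self]⟩
        · rw [Function.update_of_ne hjz] at hj' ⊢
          exact hpow j hj'
    have hptn : ptn k z p = (p.1 - 1, Function.update p.2 z (2 ^ (p.1 - 1))) := by
      rw [ptn, if_pos ⟨hsum, hpow⟩, if_pos hz]
    have h5 : ((p.1 - 1 : ℕ), Function.update p.2 z (2 ^ (p.1 - 1))).2 z ≠ 0 := by
      show Function.update p.2 z (2 ^ (p.1 - 1)) z ≠ 0
      rw [Function.update_self]; omega
    have h6 : Nat.log 2 (((p.1 - 1 : ℕ), Function.update p.2 z (2 ^ (p.1 - 1))).2 z)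
        = ((p.1 - 1 : ℕ), Function.update p.2 z (2 ^ (p.1 - 1))).1 := by
      show Nat.log 2 (Function.update p.2 z (2 ^ (p.1 - 1)) z) = p.1 - 1
      rw [Function.update_self, Nat.log_pow one_lt_two]
    refine ⟨hptn ▸ hCq, ?_, ?_, ?_, ?_, ?_, ?_, ?_⟩
    · rw [hptn]; show p.1 - 1 < k; omega
    · rw [hptn]
      intro j
      show Function.update p.2 z (2 ^ (p.1 - 1)) j < 2 ^ k
      by_cases hjz : j = z
      · subst hjz
        rw [Function.update_self]
        exact lt_trans ((Nat.pow_lt_pow_iff_right one_lt_two).mpr (by omega)) hik2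
      · rw [Function.update_of_ne hjz]; exact hPb j
    · rw [hptn]
      intro h
      have h1 := congrArg Prod.fst h
      simp only [sp] at h1
      omega
    · rw [hptn]
      intro h
      have h2 := congrArg (fun r => r.2 z) h
      simp only [Function.update_self] at h2
      rw [hz] at h2
      omega
    · rw [hptn, ptn, if_pos hCq, if_neg h5, if_pos h6]
      show ((p.1 - 1) + 1, Function.update (Function.update p.2 z (2 ^ (p.1 - 1))) z 0) = p
      rw [Prod.ext_iff]
      constructor
      · show p.1 - 1 + 1 = p.1; omega
      · show Function.update (Function.update p.2 z (2 ^ (p.1 - 1))) z 0 = p.2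
        rw [Function.update_idem]
        funext j
        rw [Function.update_apply]
        split_ifs with hj
        · subst hj; exact hz.symm
        · rfl
    · rw [hptn]
      show 2 ^ (p.1 - 1) + Function.update p.2 z (2 ^ (p.1 - 1)) z = 2 ^ p.1 + p.2 z
      rw [Function.update_self, hz]
      omega
    · rw [hptn]
      intro j hj
      exact Function.update_of_ne hj _ _
  · -- Case B : p.2 z = 2 ^ e
    obtain ⟨e, he⟩ := hpow z hz
    have hlog : Nat.log 2 (p.2 z) = e := by rw [he, Nat.log_pow one_lt_two]
    have h1e : (1:ℕ) ≤ 2 ^ e := Nat.one_le_two_pow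
    have hek : e < k := by
      have := hPb z
      rw [he] at this
      exact (Nat.pow_lt_pow_iff_right one_lt_two).mp this
    have hle : p.2 z ≤ 2 ^ k - 2 ^ p.1 := by
      rw [← hsum]
      exact Finset.single_le_sum (fun j _ => Nat.zero_le _) (Finset.mem_univ z)
    by_cases hei : e = p.1
    · -- Subcase B1
      rw [hei] at he hlog h1e hek
      have hik1 : p.1 + 1 < k := by
        rcases Nat.lt_or_ge (p.1 + 1) k with h | h
        · exact h
        · exfalso
          have hkk : k = p.1 + 1 := by omega
          have h2k' : ∀ a : ℕ, k = a + 1 → (2:ℕ) ^ k = 2 * 2 ^ a := by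
            intro a ha; rw [ha]; ring
          have h2k := h2k' p.1 hkk
          have hzero : ∀ j ∈ Finset.univ.erase z, p.2 j = 0 := by
            rw [← Finset.sum_eq_zero_iff]
            omega
          apply hnsp
          rw [Prod.ext_iff]
          constructor
          · show p.1 = k - 1; omega
          · funext j
            show p.2 j = if j = z then 2 ^ (k - 1) else 0
            split_ifs with hj
            · rw [hj, he]
              congr 1
              omega
            · exact hzero j (Finset.mem_erase.mpr ⟨hj, Finset.mem_univ _⟩)
      have h2s : (2:ℕ) ^ (p.1 + 1) = 2 * 2 ^ p.1 := by ring
      have h2sk : (2:ℕ) ^ (p.1 + 1) ≤ 2 ^ k :=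
        Nat.pow_le_pow_right (by norm_num) (by omega)
      have hCq : Cd k (p.1 + 1, Function.update p.2 z 0) := by
        constructor
        · show ∑ j, Function.update p.2 z 0 j = 2 ^ k - 2 ^ (p.1 + 1)
          rw [sum_update k z]
          omega
        · intro j hj
          have hj' : Function.update p.2 z 0 j ≠ 0 := hj
          show ∃ e', Function.update p.2 z 0 j = 2 ^ e'
          by_cases hjz : j = z
          · rw [hjz, Function.update_self] at hj'
            exact absurd rfl hj'
          · rw [Function.update_of_ne hjz] at hj' ⊢
            exact hpow j hj'
      have hptn : ptn k z p = (p.1 + 1, Function.update p.2 z 0) := by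
        rw [ptn, if_pos ⟨hsum, hpow⟩, if_neg hz, if_pos hlog]
      have h5 : ((p.1 + 1 : ℕ), Function.update p.2 z 0).2 z = 0 := by
        show Function.update p.2 z 0 z = 0
        rw [Function.update_self]
      refine ⟨hptn ▸ hCq, ?_, ?_, ?_, ?_, ?_, ?_, ?_⟩
      · rw [hptn]; exact hik1
      · rw [hptn]
        intro j
        show Function.update p.2 z 0 j < 2 ^ k
        by_cases hjz : j = z
        · rw [hjz, Function.update_self]; omega
        · rw [Function.update_of_ne hjz]; exact hPb j
      · rw [hptn]
        intro h
        have h2 := congrArg (fun r => r.2 z) h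
        simp only [sp, if_pos rfl, Function.update_self] at h2
        have : (1:ℕ) ≤ 2 ^ (k - 1) := Nat.one_le_two_pow
        simp only [if_true] at h2
        omega
      · rw [hptn]
        intro h
        have h1 := congrArg Prod.fst h
        simp only at h1
        omega
      · rw [hptn, ptn, if_pos hCq, if_pos h5]
        show ((p.1 + 1) - 1, Function.update (Function.update p.2 z 0) z (2 ^ ((p.1 + 1) - 1))) = p
        rw [Prod.ext_iff]
        constructor
        · show p.1 + 1 - 1 = p.1; omega
        · show Function.update (Function.update p.2 z 0) z (2 ^ (p.1 + 1 - 1)) = p.2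
          rw [Function.update_idem]
          funext j
          rw [Function.update_apply]
          split_ifs with hj
          · rw [hj, Nat.add_sub_cancel, he]
          · rfl
      · rw [hptn]
        show 2 ^ (p.1 + 1) + Function.update p.2 z 0 z = 2 ^ p.1 + p.2 z
        rw [Function.update_self, he]
        omega
      · rw [hptn]
        intro j hj
        exact Function.update_of_ne hj _ _
    · -- Subcase B2 : e ≠ p.1
      have hCq : Cd k (e, Function.update p.2 z (2 ^ p.1)) := by
        constructor
        · show ∑ j, Function.update p.2 z (2 ^ p.1) j = 2 ^ k - 2 ^ e
          rw [sum_update k z]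
          omega
        · intro j hj
          have hj' : Function.update p.2 z (2 ^ p.1) j ≠ 0 := hj
          show ∃ e', Function.update p.2 z (2 ^ p.1) j = 2 ^ e'
          by_cases hjz : j = z
          · exact ⟨p.1, by rw [hjz, Function.update_self]⟩
          · rw [Function.update_of_ne hjz] at hj' ⊢
            exact hpow j hj'
      have hptn : ptn k z p = (e, Function.update p.2 z (2 ^ p.1)) := by
        rw [ptn, if_pos ⟨hsum, hpow⟩, if_neg hz, if_neg (by rw [hlog]; exact hei), hlog]
      have h5 : ((e : ℕ), Function.update p.2 z (2 ^ p.1)).2 z ≠ 0 := by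
        show Function.update p.2 z (2 ^ p.1) z ≠ 0
        rw [Function.update_self]; omega
      have h6 : Nat.log 2 (((e : ℕ), Function.update p.2 z (2 ^ p.1)).2 z)
          ≠ ((e : ℕ), Function.update p.2 z (2 ^ p.1)).1 := by
        show Nat.log 2 (Function.update p.2 z (2 ^ p.1) z) ≠ e
        rw [Function.update_self, Nat.log_pow one_lt_two]
        exact fun h => hei h.symm
      refine ⟨hptn ▸ hCq, ?_, ?_, ?_, ?_, ?_, ?_, ?_⟩
      · rw [hptn]; exact hek
      · rw [hptn]
        intro j
        show Function.update p.2 z (2 ^ p.1) j < 2 ^ k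
        by_cases hjz : j = z
        · subst hjz; rw [Function.update_self]; exact hik2
        · rw [Function.update_of_ne hjz]; exact hPb j
      · rw [hptn]
        intro h
        have h1 := congrArg Prod.fst h
        have h2 := congrArg (fun r => r.2 z) h
        simp only [sp, if_pos rfl, Function.update_self] at h1 h2
        apply hei
        have : p.1 = k - 1 := Nat.pow_right_injective (le_refl 2) h2
        omega
      · rw [hptn]
        intro h
        have h1 := congrArg Prod.fst h
        simp only at h1
        exact hei h1
      · rw [hptn, ptn, if_pos hCq, if_neg h5, if_neg h6]
        show (Nat.log 2 (Function.update p.2 z (2 ^ p.1) z),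
          Function.update (Function.update p.2 z (2 ^ p.1)) z (2 ^ e)) = p
        rw [Function.update_self, Nat.log_pow one_lt_two, Prod.ext_iff]
        refine ⟨rfl, ?_⟩
        show Function.update (Function.update p.2 z (2 ^ p.1)) z (2 ^ e) = p.2
        rw [Function.update_idem]
        funext j
        rw [Function.update_apply]
        split_ifs with hj
        · subst hj; exact he.symm
        · rfl
      · rw [hptn]
        show 2 ^ e + Function.update p.2 z (2 ^ p.1) z = 2 ^ p.1 + p.2 z
        rw [Function.update_self, he]
        omega
      · rw [hptn]
        intro j hj
        exact Function.update_of_ne hj _ _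
end

open Classical in
lemma G_eq (k m : ℕ) :
    G k m = ∑ d ∈ Fintype.piFinset (fun _ : Fin k => Finset.range (m + 1)),
      if (∑ i, d i) = m ∧ ∀ i, d i ≠ 0 → ∃ e, d i = 2 ^ e then
        ∏ i, (X i : MvPolynomial (Fin k) (ZMod 2)) ^ d i
      else 0 := by
  rw [G]
  refine Finset.sum_bij' (fun (d : Fin k → Fin (m+1)) _ => fun i => (d i : ℕ))
    (fun (d : Fin k → ℕ) hd => fun i => (⟨d i, ?_⟩ : Fin (m+1)))
    (fun d _ => ?_) (fun d hd => Finset.mem_univ _) (fun d hd => ?_) (fun d hd => ?_)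
    (fun d hd => ?_)
  · exact Finset.mem_range.mp (Fintype.mem_piFinset.mp hd i)
  · exact Fintype.mem_piFinset.mpr fun i => Finset.mem_range.mpr (d i).isLt
  · funext i; simp
  · funext i; simp
  · rfl

open Classical in
lemma G_eq' (k m M : ℕ) (hm : m < M) :
    G k m = ∑ d ∈ Fintype.piFinset (fun _ : Fin k => Finset.range M),
      if (∑ i, d i) = m ∧ ∀ i, d i ≠ 0 → ∃ e, d i = 2 ^ e then
        ∏ i, (X i : MvPolynomial (Fin k) (ZMod 2)) ^ d i
      else 0 := by
  rw [G_eq]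
  refine Finset.sum_subset (Fintype.piFinset_subset _ _ fun i => ?_) ?_
  · exact Finset.range_subset_range.mpr hm
  · intro d hd hnd
    rw [if_neg]
    rintro ⟨hsum, -⟩
    apply hnd
    refine Fintype.mem_piFinset.mpr fun i => Finset.mem_range.mpr ?_
    have : d i ≤ ∑ j, d j := Finset.single_le_sum (fun j _ => Nat.zero_le _) (Finset.mem_univ i)
    omega

theorem stmt9 (k : ℕ) (hk : 1 ≤ k) :
    ∑ i ∈ Finset.range k,
        (X (⟨0, hk⟩ : Fin k) : MvPolynomial (Fin k) (ZMod 2)) ^ (2 ^ i) * G k (2 ^ k - 2 ^ i) =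
      X (⟨0, hk⟩ : Fin k) ^ (2 ^ k) := by
  classical
  set z : Fin k := ⟨0, hk⟩ with hzdef
  have h2k' : ∀ a : ℕ, k = a + 1 → (2:ℕ) ^ k = 2 * 2 ^ a := by
    intro a ha; rw [ha]; ring
  have h2k := h2k' (k - 1) (by omega)
  have h1k : (1:ℕ) ≤ 2 ^ (k - 1) := Nat.one_le_two_pow
  set P : Finset (Fin k → ℕ) := Fintype.piFinset (fun _ : Fin k => Finset.range (2 ^ k))
    with hP
  set F : ℕ × (Fin k → ℕ) → MvPolynomial (Fin k) (ZMod 2) := fun p =>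
    if Cd k p then
      X z ^ (2 ^ p.1 + p.2 z) * ∏ j ∈ Finset.univ.erase z, X j ^ p.2 j
    else 0 with hF
  -- the special pair
  have hCsp : Cd k (sp k z) := by
    constructor
    · show ∑ j, (if j = z then 2 ^ (k-1) else 0) = 2 ^ k - 2 ^ (k - 1)
      rw [sum_split k z]
      rw [if_pos rfl]
      have hrest : ∑ j ∈ Finset.univ.erase z, (if j = z then 2 ^ (k-1) else 0) = 0 :=
        Finset.sum_eq_zero fun j hj => if_neg (Finset.mem_erase.mp hj).1
      rw [hrest]
      omega
    · intro j hj
      have hj' : (if j = z then 2 ^ (k-1) else 0) ≠ 0 := hj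
      show ∃ e, (if j = z then 2 ^ (k-1) else 0) = 2 ^ e
      by_cases hjz : j = z
      · exact ⟨k - 1, by rw [if_pos hjz]⟩
      · rw [if_neg hjz] at hj'
        exact absurd rfl hj'
  have hsp : sp k z ∈ Finset.range k ×ˢ P := by
    refine Finset.mem_product.mpr ⟨Finset.mem_range.mpr (show k - 1 < k by omega), ?_⟩
    refine Fintype.mem_piFinset.mpr fun j => Finset.mem_range.mpr ?_
    show (if j = z then 2 ^ (k-1) else 0) < 2 ^ k
    split_ifs
    · omega
    · omega
  have hFsp : F (sp k z) = X z ^ (2 ^ k) := by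
    rw [hF]
    simp only
    rw [if_pos hCsp]
    have h1 : (sp k z).2 z = 2 ^ (k - 1) := by
      show (if z = z then 2 ^ (k - 1) else 0) = 2 ^ (k - 1)
      rw [if_pos rfl]
    have h2 : ∏ j ∈ Finset.univ.erase z, (X j : MvPolynomial (Fin k) (ZMod 2)) ^ (sp k z).2 j
        = 1 := by
      refine Finset.prod_eq_one fun j hj => ?_
      have : (sp k z).2 j = 0 := if_neg (Finset.mem_erase.mp hj).1
      rw [this, pow_zero]
    rw [h1, h2, mul_one]
    congr 1
    show 2 ^ (k - 1) + 2 ^ (k - 1) = 2 ^ k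
    omega
  -- step 1 : rewrite each summand
  have hstep : ∀ i ∈ Finset.range k,
      (X z : MvPolynomial (Fin k) (ZMod 2)) ^ (2 ^ i) * G k (2 ^ k - 2 ^ i)
        = ∑ d ∈ P, F (i, d) := by
    intro i hi
    have hik : i < k := Finset.mem_range.mp hi
    have h1i : (1:ℕ) ≤ 2 ^ i := Nat.one_le_two_pow
    have hlt : 2 ^ k - 2 ^ i < 2 ^ k := by
      have : (1:ℕ) ≤ 2 ^ k := Nat.one_le_two_pow
      omega
    rw [G_eq' k _ _ hlt, Finset.mul_sum]
    refine Finset.sum_congr rfl fun d hd => ?_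
    rw [hF]
    simp only
    by_cases hc : Cd k (i, d)
    · have hc' : (∑ j, d j) = 2 ^ k - 2 ^ i ∧ ∀ j, d j ≠ 0 → ∃ e, d j = 2 ^ e := hc
      rw [if_pos hc', if_pos hc]
      show (X z : MvPolynomial (Fin k) (ZMod 2)) ^ (2 ^ i) * ∏ j, X j ^ d j
        = X z ^ (2 ^ i + d z) * ∏ j ∈ Finset.univ.erase z, X j ^ d j
      rw [← Finset.mul_prod_erase Finset.univ _ (Finset.mem_univ z), ← mul_assoc, ← pow_add]
    · have hc' : ¬((∑ j, d j) = 2 ^ k - 2 ^ i ∧ ∀ j, d j ≠ 0 → ∃ e, d j = 2 ^ e) :=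
        fun h => hc h
      rw [if_neg hc', if_neg hc, mul_zero]
  -- char 2
  have hchar : ∀ a : MvPolynomial (Fin k) (ZMod 2), a + a = 0 := by
    intro a
    have h2 : (2 : MvPolynomial (Fin k) (ZMod 2)) = 0 := by
      have := CharP.cast_eq_zero (MvPolynomial (Fin k) (ZMod 2)) 2
      simpa using this
    rw [← two_mul, h2, zero_mul]
  -- the cancelling sum
  have hzero : ∑ p ∈ ((Finset.range k ×ˢ P).erase (sp k z)), F p = 0 := by
    refine Finset.sum_involution (fun p _ => ptn k z p) ?_ ?_ ?_ ?_
    · -- F p + F (ptn p) = 0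
      intro p hp
      show F p + F (ptn k z p) = 0
      by_cases hc : Cd k p
      · have hmem := Finset.mem_erase.mp hp
        have hpr := Finset.mem_product.mp hmem.2
        have hik : p.1 < k := Finset.mem_range.mp hpr.1
        have hPb : ∀ j, p.2 j < 2 ^ k := fun j =>
          Finset.mem_range.mp (Fintype.mem_piFinset.mp hpr.2 j)
        obtain ⟨hCq, _, _, _, _, _, hexp, hoff⟩ := ptn_spec k z hk p hik hPb hc hmem.1
        have hFF : F (ptn k z p) = F p := by
          rw [hF]
          simp only
          rw [if_pos hCq, if_pos hc, hexp]
          congr 1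
          refine Finset.prod_congr rfl fun j hj => ?_
          rw [hoff j (Finset.mem_erase.mp hj).1]
        rw [hFF]
        exact hchar _
      · have hptn : ptn k z p = p := by rw [ptn, if_neg hc]
        rw [hptn, hF]
        simp only
        rw [if_neg hc, add_zero]
    · -- F p ≠ 0 → ptn p ≠ p
      intro p hp hne
      show ptn k z p ≠ p
      have hc : Cd k p := by
        by_contra hc
        apply hne
        rw [hF]; simp only; rw [if_neg hc]
      have hmem := Finset.mem_erase.mp hp
      have hpr := Finset.mem_product.mp hmem.2
      have hik : p.1 < k := Finset.mem_range.mp hpr.1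
      have hPb : ∀ j, p.2 j < 2 ^ k := fun j =>
        Finset.mem_range.mp (Fintype.mem_piFinset.mp hpr.2 j)
      exact (ptn_spec k z hk p hik hPb hc hmem.1).2.2.2.2.1
    · -- ptn p ∈ erased set
      intro p hp
      show ptn k z p ∈ (Finset.range k ×ˢ P).erase (sp k z)
      by_cases hc : Cd k p
      · have hmem := Finset.mem_erase.mp hp
        have hpr := Finset.mem_product.mp hmem.2
        have hik : p.1 < k := Finset.mem_range.mp hpr.1
        have hPb : ∀ j, p.2 j < 2 ^ k := fun j =>
          Finset.mem_range.mp (Fintype.mem_piFinset.mp hpr.2 j)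
        obtain ⟨_, hq1, hq2, hq3, _, _, _, _⟩ := ptn_spec k z hk p hik hPb hc hmem.1
        refine Finset.mem_erase.mpr ⟨hq3, Finset.mem_product.mpr ⟨?_, ?_⟩⟩
        · exact Finset.mem_range.mpr hq1
        · exact Fintype.mem_piFinset.mpr fun j => Finset.mem_range.mpr (hq2 j)
      · have hptn : ptn k z p = p := by rw [ptn, if_neg hc]
        rw [hptn]
        exact hp
    · -- involution
      intro p hp
      show ptn k z (ptn k z p) = p
      by_cases hc : Cd k p
      · have hmem := Finset.mem_erase.mp hp
        have hpr := Finset.mem_product.mp hmem.2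
        have hik : p.1 < k := Finset.mem_range.mp hpr.1
        have hPb : ∀ j, p.2 j < 2 ^ k := fun j =>
          Finset.mem_range.mp (Fintype.mem_piFinset.mp hpr.2 j)
        exact (ptn_spec k z hk p hik hPb hc hmem.1).2.2.2.2.2.1
      · have hptn : ptn k z p = p := by rw [ptn, if_neg hc]
        rw [hptn, hptn]
  calc ∑ i ∈ Finset.range k,
      (X z : MvPolynomial (Fin k) (ZMod 2)) ^ (2 ^ i) * G k (2 ^ k - 2 ^ i)
      = ∑ i ∈ Finset.range k, ∑ d ∈ P, F (i, d) := Finset.sum_congr rfl hstep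
    _ = ∑ p ∈ Finset.range k ×ˢ P, F p := (Finset.sum_product _ _ _).symm
    _ = F (sp k z) + ∑ p ∈ ((Finset.range k ×ˢ P).erase (sp k z)), F p :=
        (Finset.add_sum_erase _ F hsp).symm
    _ = X z ^ (2 ^ k) := by rw [hFsp, hzero, add_zero]
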